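/- Let F be a Ferrers shape whose right/up boundary from top-left to bottom-right is encoded by the word w = w_1 w_2 ... w_k in the letters D (down) and R (right). The 0-1-fillings of F with at most one 1 in each row and each column are in bijection with sequences (∅ = λ^0, λ^1, ..., λ^k = ∅) of integer partitions such that consecutive partitions differ by at most one square, λ^{i-1} ⊆ λ^i whenever w_i = R, and λ^{i-1} ⊇ λ^i whenever w_i = D. -/

import Mathlib

/-- `f` is a 0-1-filling of the Ferrers shape `F`. -/
def Filling01 (F : YoungDiagram) (f : ℕ × ℕ → ℕ) : Prop :=
  ∀ c, f c ≠ 0 → c ∈ F ∧ f c = 1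

/-- The filling `f` has at most one `1` in each row and in each column. -/
def AtMostOnePerRowCol (f : ℕ × ℕ → ℕ) : Prop :=
  ∀ c d, f c ≠ 0 → f d ≠ 0 → c ≠ d → c.1 ≠ d.1 ∧ c.2 ≠ d.2

/-- `ν` is obtained from `μ` by adding at most one square. -/
def AddBoxLE (μ ν : YoungDiagram) : Prop :=
  μ ≤ ν ∧ ν.card ≤ μ.card + 1

/-- The boundary word `w : Fin k → Bool` (with `true` = R, a right-step, and
`false` = D, a down-step, read from top-left to bottom-right) encodes the Ferrers
shape `F`: the number of R's is the width of `F`, the number of D's is the height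
of `F`, and the number of D's after the `x`-th R equals the length of the `x`-th
column of `F` (columns indexed from `0`, so the `x`-th R is the one after which
`RUpTo = x + 1`). -/
def Encodes (F : YoungDiagram) {k : ℕ} (w : Fin k → Bool) : Prop :=
  (Finset.univ.filter (fun j : Fin k => w j = true)).card = F.rowLen 0 ∧
  (Finset.univ.filter (fun j : Fin k => w j = false)).card = F.colLen 0 ∧
  ∀ i : Fin k, w i = true →
    F.colLen ((Finset.univ.filter (fun j : Fin k => j ≤ i ∧ w j = true)).card - 1) =
      (Finset.univ.filter (fun j : Fin k => i < j ∧ w j = false)).card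

namespace GrowthAux


open YoungDiagram Finset

/-- `ν` is obtained from `μ` by adding at most one square. -/
abbrev ABLE : YoungDiagram → YoungDiagram → Prop := AddBoxLE

lemma yd_ext {μ ν : YoungDiagram} (h : μ.cells = ν.cells) : μ = ν := by
  cases μ; cases ν; simpa using h

lemma eq_of_le_card {μ ν : YoungDiagram} (h : μ ≤ ν) (hc : ν.card ≤ μ.card) : μ = ν :=
  yd_ext (Finset.eq_of_subset_of_card_le (by exact_mod_cast h) hc)

lemma rowLen_eq {ν : YoungDiagram} {i n : ℕ} (h1 : (i, n) ∉ ν)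
    (h2 : ∀ j < n, (i, j) ∈ ν) : ν.rowLen i = n := by
  rw [mem_iff_lt_rowLen] at h1
  rcases Nat.eq_zero_or_pos n with h | h
  · omega
  · have := h2 (n - 1) (by omega)
    rw [mem_iff_lt_rowLen] at this
    omega

/-- add a cell at the end of row `r`, if the result is a Young diagram. -/
noncomputable def addCell (μ : YoungDiagram) (r : ℕ) : YoungDiagram :=
  if h : r = 0 ∨ μ.rowLen r < μ.rowLen (r - 1) then
    { cells := insert (r, μ.rowLen r) μ.cells
      isLowerSet := by
        intro x y hle hx
        simp only [Finset.coe_insert, Set.mem_insert_iff, Finset.mem_coe] at hx ⊢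
        rcases hx with hx | hx
        · subst hx
          obtain ⟨i, j⟩ := y
          obtain ⟨hi, hj⟩ := hle
          simp only [Prod.mk.injEq]
          rcases Nat.lt_or_ge j (μ.rowLen r) with hj' | hj'
          · right
            exact μ.up_left_mem hi le_rfl (mem_iff_lt_rowLen.2 hj')
          · have hj2 : j = μ.rowLen r := le_antisymm hj hj'
            rcases Nat.lt_or_ge i r with hi' | hi'
            · right
              have hr : r ≠ 0 := by omega
              have hlt : μ.rowLen r < μ.rowLen (r - 1) := h.resolve_left hr
              have : (r - 1, μ.rowLen r) ∈ μ := mem_iff_lt_rowLen.2 hlt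
              exact μ.up_left_mem (by omega) (le_of_eq hj2) this
            · left; exact ⟨le_antisymm hi hi', hj2⟩
        · right
          exact μ.isLowerSet hle hx }
  else μ

lemma addCell_cells {μ : YoungDiagram} {r : ℕ} (h : r = 0 ∨ μ.rowLen r < μ.rowLen (r - 1)) :
    (addCell μ r).cells = insert (r, μ.rowLen r) μ.cells := by
  rw [addCell, dif_pos h]

lemma corner_not_mem (μ : YoungDiagram) (r : ℕ) : (r, μ.rowLen r) ∉ μ := by
  rw [mem_iff_lt_rowLen]; omega

lemma le_addCell (μ : YoungDiagram) (r : ℕ) : μ ≤ addCell μ r := by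
  rw [addCell]
  split
  · intro c hc
    show c ∈ insert (r, μ.rowLen r) μ.cells; rw [Finset.mem_insert]
    right; exact hc
  · exact le_rfl

lemma card_addCell {μ : YoungDiagram} {r : ℕ} (h : r = 0 ∨ μ.rowLen r < μ.rowLen (r - 1)) :
    (addCell μ r).card = μ.card + 1 := by
  show (addCell μ r).cells.card = μ.cells.card + 1
  rw [addCell_cells h, Finset.card_insert_of_notMem (by simpa using corner_not_mem μ r)]

lemma mem_addCell {μ : YoungDiagram} {r : ℕ} (h : r = 0 ∨ μ.rowLen r < μ.rowLen (r - 1))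
    (c : ℕ × ℕ) : c ∈ addCell μ r ↔ c = (r, μ.rowLen r) ∨ c ∈ μ := by
  show c ∈ (addCell μ r).cells ↔ _
  rw [addCell_cells h, Finset.mem_insert]; rfl

lemma rowLen_addCell_self {μ : YoungDiagram} {r : ℕ}
    (h : r = 0 ∨ μ.rowLen r < μ.rowLen (r - 1)) :
    (addCell μ r).rowLen r = μ.rowLen r + 1 := by
  apply rowLen_eq
  · rw [mem_addCell h]
    push_neg
    constructor
    · intro hc; simp at hc
    · rw [mem_iff_lt_rowLen]; omega
  · intro j hj
    rw [mem_addCell h]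
    rcases Nat.lt_or_ge j (μ.rowLen r) with hj' | hj'
    · right; exact mem_iff_lt_rowLen.2 hj'
    · left; have : j = μ.rowLen r := by omega
      rw [this]

lemma rowLen_addCell_ne {μ : YoungDiagram} {r i : ℕ}
    (h : r = 0 ∨ μ.rowLen r < μ.rowLen (r - 1)) (hi : i ≠ r) :
    (addCell μ r).rowLen i = μ.rowLen i := by
  apply rowLen_eq
  · rw [mem_addCell h]
    push_neg
    exact ⟨by simp [hi], corner_not_mem μ i⟩
  · intro j hj
    rw [mem_addCell h]
    right; exact mem_iff_lt_rowLen.2 hj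

lemma addCell_ne {μ : YoungDiagram} {r : ℕ} (h : r = 0 ∨ μ.rowLen r < μ.rowLen (r - 1)) :
    addCell μ r ≠ μ := by
  intro heq
  have := card_addCell h
  rw [heq] at this
  omega

/-- delete the cell at the end of row `r`, if the result is a Young diagram. -/
noncomputable def delCell (lam : YoungDiagram) (r : ℕ) : YoungDiagram :=
  if h : lam.rowLen (r + 1) < lam.rowLen r then
    { cells := lam.cells.erase (r, lam.rowLen r - 1)
      isLowerSet := by
        intro x y hle hx
        simp only [Finset.coe_erase, Set.mem_diff, Finset.mem_coe, Set.mem_singleton_iff] at hx ⊢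
        obtain ⟨hx1, hx2⟩ := hx
        refine ⟨lam.isLowerSet hle hx1, ?_⟩
        rintro rfl
        obtain ⟨i, j⟩ := x
        obtain ⟨hi, hj⟩ := hle
        simp only at hi hj
        have hxlt : j < lam.rowLen i := mem_iff_lt_rowLen.1 hx1
        rcases Nat.lt_or_ge r i with hi' | hi'
        · have : lam.rowLen i ≤ lam.rowLen (r + 1) := lam.rowLen_anti _ _ (by omega)
          omega
        · have : i = r := by omega
          subst this
          apply hx2
          have : j = lam.rowLen i - 1 := by omega
          rw [this] }
  else lam

lemma delCell_cells {lam : YoungDiagram} {r : ℕ} (h : lam.rowLen (r + 1) < lam.rowLen r) :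
    (delCell lam r).cells = lam.cells.erase (r, lam.rowLen r - 1) := by
  rw [delCell, dif_pos h]

lemma endCell_mem {lam : YoungDiagram} {r : ℕ} (h : 0 < lam.rowLen r) :
    (r, lam.rowLen r - 1) ∈ lam := by
  rw [mem_iff_lt_rowLen]; omega

lemma delCell_le {lam : YoungDiagram} {r : ℕ} : delCell lam r ≤ lam := by
  rw [delCell]; split
  · intro c hc
    have hc : c ∈ lam.cells.erase (r, lam.rowLen r - 1) := hc; rw [Finset.mem_erase] at hc
    exact hc.2
  · exact le_rfl

lemma card_delCell {lam : YoungDiagram} {r : ℕ} (h : lam.rowLen (r + 1) < lam.rowLen r) :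
    lam.card = (delCell lam r).card + 1 := by
  show lam.cells.card = (delCell lam r).cells.card + 1
  rw [delCell_cells h, Finset.card_erase_of_mem (by simpa using endCell_mem (by omega))]
  have : 0 < lam.cells.card := Finset.card_pos.2 ⟨_, by simpa using endCell_mem (r := r) (by omega)⟩
  omega

lemma addCell_delCell {lam : YoungDiagram} {r : ℕ} (h : lam.rowLen (r + 1) < lam.rowLen r) :
    addCell (delCell lam r) r = lam := by
  have hmem : (r, lam.rowLen r - 1) ∈ lam.cells := by simpa using endCell_mem (r := r) (by omega)
  have hrl : (delCell lam r).rowLen r = lam.rowLen r - 1 := by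
    apply rowLen_eq
    · show _ ∉ (delCell lam r).cells
      rw [delCell_cells h]
      exact Finset.notMem_erase _ _
    · intro j hj
      show _ ∈ (delCell lam r).cells
      rw [delCell_cells h, Finset.mem_erase]
      constructor
      · simp only [ne_eq, Prod.mk.injEq, not_and]; omega
      · simpa using mem_iff_lt_rowLen.2 (by omega)
  have hrl1 : 0 < r → (delCell lam r).rowLen (r - 1) ≥ lam.rowLen r := by
    intro hr
    · have : (r - 1, lam.rowLen r - 1) ∈ (delCell lam r).cells := by
        rw [delCell_cells h, Finset.mem_erase]
        constructor
        · simp only [ne_eq, Prod.mk.injEq, not_and]; omega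
        · simpa using lam.up_left_mem (by omega) le_rfl (endCell_mem (by omega))
      have := mem_iff_lt_rowLen.1 (by simpa using this : ((r-1 : ℕ), lam.rowLen r - 1) ∈ delCell lam r)
      omega
  have hvalid : r = 0 ∨ (delCell lam r).rowLen r < (delCell lam r).rowLen (r - 1) := by
    rcases Nat.eq_zero_or_pos r with hr | hr
    · left; exact hr
    · right; have := hrl1 hr; omega
  apply yd_ext
  rw [addCell_cells hvalid, hrl, delCell_cells h, Finset.insert_erase hmem]

/-- the unique cell of `ν \ μ` (junk value if not unique). -/
noncomputable def theBox (μ ν : YoungDiagram) : ℕ × ℕ :=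
  if h : (ν.cells \ μ.cells).Nonempty then h.choose else (0, 0)

lemma theBox_spec {μ ν : YoungDiagram} (hle : μ ≤ ν) (hne : ν ≠ μ) (hc : ν.card ≤ μ.card + 1) :
    ν.cells = insert (theBox μ ν) μ.cells ∧ theBox μ ν ∉ μ.cells := by
  have hsub : μ.cells ⊆ ν.cells := by exact_mod_cast hle
  have hnonempty : (ν.cells \ μ.cells).Nonempty := by
    rw [Finset.sdiff_nonempty]
    intro hsub2
    exact hne (yd_ext (Finset.Subset.antisymm hsub2 hsub))
  have hcard : (ν.cells \ μ.cells).card = 1 := by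
    have h1 : (ν.cells \ μ.cells).card = ν.cells.card - μ.cells.card :=
      Finset.card_sdiff_of_subset hsub
    have h2 : μ.cells.card ≤ ν.cells.card := Finset.card_le_card hsub
    have h3 : 0 < (ν.cells \ μ.cells).card := Finset.card_pos.2 hnonempty
    have hc' : ν.cells.card ≤ μ.cells.card + 1 := hc
    omega
  obtain ⟨c, hcc⟩ := Finset.card_eq_one.1 hcard
  have hbox : theBox μ ν = c := by
    rw [theBox, dif_pos hnonempty]
    have h2 : hnonempty.choose ∈ ({c} : Finset (ℕ × ℕ)) := by
      rw [← hcc]; exact hnonempty.choose_spec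
    simpa using h2
  rw [hbox]
  have hcmem : c ∈ ν.cells \ μ.cells := by rw [hcc]; simp
  constructor
  · apply Finset.Subset.antisymm
    · intro x hx
      by_cases hxμ : x ∈ μ.cells
      · exact Finset.mem_insert_of_mem hxμ
      · have : x ∈ ν.cells \ μ.cells := Finset.mem_sdiff.2 ⟨hx, hxμ⟩
        rw [hcc] at this
        simp only [Finset.mem_singleton] at this
        rw [this]; exact Finset.mem_insert_self _ _
    · intro x hx
      rcases Finset.mem_insert.1 hx with rfl | hx
      · exact (Finset.mem_sdiff.1 hcmem).1
      · exact hsub hx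
  · exact (Finset.mem_sdiff.1 hcmem).2

lemma theBox_insert {μ ν : YoungDiagram} (h : ν.cells = insert c μ.cells) (hc : c ∉ μ.cells) :
    theBox μ ν = c := by
  have hnonempty : (ν.cells \ μ.cells).Nonempty := by
    refine ⟨c, Finset.mem_sdiff.2 ⟨?_, hc⟩⟩
    rw [h]; exact Finset.mem_insert_self _ _
  rw [theBox, dif_pos hnonempty]
  have h2 := Finset.mem_sdiff.1 hnonempty.choose_spec
  have h1 : hnonempty.choose ∈ insert c μ.cells := by rw [← h]; exact h2.1
  rcases Finset.mem_insert.1 h1 with h3 | h3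
  · exact h3
  · exact absurd h3 h2.2

/-- structure of a cover: `ν = addCell μ r` where `(r, _) = theBox μ ν`. -/
lemma cover_spec {μ ν : YoungDiagram} (hle : μ ≤ ν) (hne : ν ≠ μ) (hc : ν.card ≤ μ.card + 1) :
    ((theBox μ ν).1 = 0 ∨ μ.rowLen (theBox μ ν).1 < μ.rowLen ((theBox μ ν).1 - 1)) ∧
      ν = addCell μ (theBox μ ν).1 ∧
      theBox μ ν = ((theBox μ ν).1, μ.rowLen (theBox μ ν).1) ∧ ν.card = μ.card + 1 := by
  obtain ⟨hcells, hnotmem⟩ := theBox_spec hle hne hc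
  set c := theBox μ ν with hcdef
  obtain ⟨r, j⟩ := c
  simp only at *
  have hcν : (r, j) ∈ ν := by
    rw [← YoungDiagram.mem_cells, hcells]; exact Finset.mem_insert_self _ _
  have hj1 : μ.rowLen r ≤ j := by
    by_contra hlt
    exact hnotmem (mem_iff_lt_rowLen.2 (by omega))
  have hj : j = μ.rowLen r := by
    rcases Nat.eq_or_lt_of_le hj1 with h | h
    · omega
    · exfalso
      have hmem : (r, μ.rowLen r) ∈ ν := ν.up_left_mem le_rfl (by omega) hcν
      rw [← YoungDiagram.mem_cells, hcells, Finset.mem_insert] at hmem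
      rcases hmem with hmem | hmem
      · simp only [Prod.mk.injEq] at hmem; omega
      · exact corner_not_mem μ r hmem
  subst hj
  have hvalid : r = 0 ∨ μ.rowLen r < μ.rowLen (r - 1) := by
    rcases Nat.eq_zero_or_pos r with hr | hr
    · left; exact hr
    · right
      have hmem : (r - 1, μ.rowLen r) ∈ ν := ν.up_left_mem (by omega) le_rfl hcν
      rw [← YoungDiagram.mem_cells, hcells, Finset.mem_insert] at hmem
      rcases hmem with hmem | hmem
      · simp only [Prod.mk.injEq] at hmem; omega
      · exact mem_iff_lt_rowLen.1 hmem
  refine ⟨hvalid, ?_, rfl, ?_⟩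
  · apply yd_ext
    rw [addCell_cells hvalid, hcells]
  · show ν.cells.card = μ.cells.card + 1
    rw [hcells, Finset.card_insert_of_notMem hnotmem]


attribute [local instance] Classical.propDecidable

noncomputable def rule (μ lam ν : YoungDiagram) (e : ℕ) : YoungDiagram :=
  if e ≠ 0 then addCell μ 0
  else if lam = μ then ν
  else if ν = μ then lam
  else if lam = ν then addCell lam ((theBox μ lam).1 + 1)
  else lam ⊔ ν

noncomputable def backRule (ν lam ρ : YoungDiagram) : YoungDiagram × ℕ :=
  if ρ = lam then (ν, 0)
  else if ρ = ν then (lam, 0)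
  else if lam = ν then
    if (theBox lam ρ).1 = 0 then (lam, 1) else (delCell lam ((theBox lam ρ).1 - 1), 0)
  else (lam ⊓ ν, 0)

lemma rule_e {μ lam ν : YoungDiagram} {e : ℕ} (h : e ≠ 0) : rule μ lam ν e = addCell μ 0 := by
  rw [rule, if_pos h]

lemma rule_1 {μ lam ν : YoungDiagram} (hl : lam = μ) : rule μ lam ν 0 = ν := by
  rw [rule, if_neg (by simp), if_pos hl]

lemma rule_2 {μ lam ν : YoungDiagram} (hl : lam ≠ μ) (hn : ν = μ) : rule μ lam ν 0 = lam := by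
  rw [rule, if_neg (by simp), if_neg hl, if_pos hn]

lemma rule_3 {μ lam ν : YoungDiagram} (hl : lam ≠ μ) (hn : ν ≠ μ) (hln : lam = ν) :
    rule μ lam ν 0 = addCell lam ((theBox μ lam).1 + 1) := by
  rw [rule, if_neg (by simp), if_neg hl, if_neg hn, if_pos hln]

lemma rule_4 {μ lam ν : YoungDiagram} (hl : lam ≠ μ) (hn : ν ≠ μ) (hln : lam ≠ ν) :
    rule μ lam ν 0 = lam ⊔ ν := by
  rw [rule, if_neg (by simp), if_neg hl, if_neg hn, if_neg hln]

lemma back_1 {ν lam ρ : YoungDiagram} (h : ρ = lam) : backRule ν lam ρ = (ν, 0) := by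
  rw [backRule, if_pos h]

lemma back_2 {ν lam ρ : YoungDiagram} (h1 : ρ ≠ lam) (h2 : ρ = ν) : backRule ν lam ρ = (lam, 0) := by
  rw [backRule, if_neg h1, if_pos h2]

lemma back_3a {ν lam ρ : YoungDiagram} (h1 : ρ ≠ lam) (h2 : ρ ≠ ν) (h3 : lam = ν)
    (h4 : (theBox lam ρ).1 = 0) : backRule ν lam ρ = (lam, 1) := by
  rw [backRule, if_neg h1, if_neg h2, if_pos h3, if_pos h4]

lemma back_3b {ν lam ρ : YoungDiagram} (h1 : ρ ≠ lam) (h2 : ρ ≠ ν) (h3 : lam = ν)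
    (h4 : (theBox lam ρ).1 ≠ 0) :
    backRule ν lam ρ = (delCell lam ((theBox lam ρ).1 - 1), 0) := by
  rw [backRule, if_neg h1, if_neg h2, if_pos h3, if_neg h4]

lemma back_4 {ν lam ρ : YoungDiagram} (h1 : ρ ≠ lam) (h2 : ρ ≠ ν) (h3 : lam ≠ ν) :
    backRule ν lam ρ = (lam ⊓ ν, 0) := by
  rw [backRule, if_neg h1, if_neg h2, if_neg h3]

lemma able_refl (μ : YoungDiagram) : ABLE μ μ := ⟨le_rfl, by omega⟩

lemma card_lt_of_le_ne {μ ν : YoungDiagram} (h : μ ≤ ν) (hne : ν ≠ μ) : μ.card < ν.card := by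
  apply Finset.card_lt_card
  rw [Finset.ssubset_iff_subset_ne]
  exact ⟨by exact_mod_cast h, fun hh => hne (yd_ext hh.symm)⟩

lemma card_sup_inf (lam ν : YoungDiagram) :
    (lam ⊔ ν).card + (lam ⊓ ν).card = lam.card + ν.card := by
  show ((lam ⊔ ν).cells).card + ((lam ⊓ ν).cells).card = _
  rw [cells_sup, cells_inf]
  exact Finset.card_union_add_card_inter _ _

lemma forward (μ lam ν : YoungDiagram) (e : ℕ)
    (hml : ABLE μ lam) (hmn : ABLE μ ν) (he : e ≠ 0 → lam = μ ∧ ν = μ) :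
    ABLE lam (rule μ lam ν e) ∧ ABLE ν (rule μ lam ν e) ∧
      (rule μ lam ν e).card + μ.card = lam.card + ν.card + (if e = 0 then 0 else 1) ∧
      backRule ν lam (rule μ lam ν e) = (μ, if e = 0 then 0 else 1) := by
  by_cases he0 : e = 0
  · subst he0
    have hif : (if (0:ℕ) = 0 then (0:ℕ) else 1) = 0 := if_pos rfl
    rw [hif]
    by_cases hl : lam = μ
    · subst hl
      rw [rule_1 rfl]
      refine ⟨hmn, able_refl ν, by omega, ?_⟩
      by_cases hn : ν = lam
      · rw [back_1 hn, hn]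
      · rw [back_2 hn rfl]
    · by_cases hn : ν = μ
      · subst hn
        rw [rule_2 hl rfl]
        refine ⟨able_refl lam, hml, by omega, ?_⟩
        rw [back_1 rfl]
      · by_cases hln : lam = ν
        · subst hln
          rw [rule_3 hl hn rfl]
          obtain ⟨hval, hadd, hbox, hcard⟩ := cover_spec hml.1 hl hml.2
          set r := (theBox μ lam).1 with hr
          have hrl_self : lam.rowLen r = μ.rowLen r + 1 := by
            conv_lhs => rw [hadd]
            exact rowLen_addCell_self hval
          have hrl_succ : lam.rowLen (r + 1) = μ.rowLen (r + 1) := by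
            conv_lhs => rw [hadd]
            exact rowLen_addCell_ne hval (by omega)
          have hanti := μ.rowLen_anti r (r + 1) (by omega)
          have hvd : lam.rowLen (r + 1) < lam.rowLen r := by omega
          have hv2 : r + 1 = 0 ∨ lam.rowLen (r + 1) < lam.rowLen (r + 1 - 1) := by
            right; simpa using hvd
          have hca : (addCell lam (r + 1)).card = lam.card + 1 := card_addCell hv2
          refine ⟨⟨le_addCell _ _, by omega⟩, ⟨le_addCell _ _, by omega⟩, by omega, ?_⟩
          have hne : addCell lam (r + 1) ≠ lam := addCell_ne hv2
          have hboxr : theBox lam (addCell lam (r + 1)) = (r + 1, lam.rowLen (r + 1)) :=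
            theBox_insert (addCell_cells hv2) (by simpa using corner_not_mem lam (r + 1))
          rw [back_3b hne hne rfl (by rw [hboxr]; simp), hboxr]
          simp only [Nat.add_sub_cancel]
          have hdel : delCell lam r = μ := by
            apply yd_ext
            rw [delCell_cells hvd]
            have hcells : lam.cells = insert (r, μ.rowLen r) μ.cells := by
              conv_lhs => rw [hadd]
              exact addCell_cells hval
            rw [hcells]
            have h5 : lam.rowLen r - 1 = μ.rowLen r := by omega
            rw [h5, Finset.erase_insert (by simpa using corner_not_mem μ r)]
          rw [hdel]
        · rw [rule_4 hl hn hln]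
          obtain ⟨_, _, _, hcard1⟩ := cover_spec hml.1 hl hml.2
          obtain ⟨_, _, _, hcard2⟩ := cover_spec hmn.1 hn hmn.2
          have hsupinf := card_sup_inf lam ν
          have hinf : lam ⊓ ν = μ := by
            have h1 : μ ≤ lam ⊓ ν := le_inf hml.1 hmn.1
            have h2 : lam ≠ lam ⊓ ν := by
              intro hh
              have : lam ≤ ν := by rw [hh]; exact inf_le_right
              exact hln (eq_of_le_card this (by omega))
            have h3 : (lam ⊓ ν).card < lam.card := card_lt_of_le_ne inf_le_left h2
            have h4 : μ.card ≤ (lam ⊓ ν).card := Finset.card_le_card (by exact_mod_cast h1)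
            exact (eq_of_le_card h1 (by omega)).symm
          have hcinf : (lam ⊓ ν).card = μ.card := by rw [hinf]
          refine ⟨⟨le_sup_left, by omega⟩, ⟨le_sup_right, by omega⟩, by omega, ?_⟩
          have hne1 : lam ⊔ ν ≠ lam := by
            intro hh
            have : (lam ⊔ ν).card = lam.card := by rw [hh]
            omega
          have hne2 : lam ⊔ ν ≠ ν := by
            intro hh
            have : (lam ⊔ ν).card = ν.card := by rw [hh]
            omega
          rw [back_4 hne1 hne2 hln, hinf]
  · obtain ⟨h1, h2⟩ := he he0
    rw [rule_e he0]
    have hif : (if e = 0 then (0:ℕ) else 1) = 1 := if_neg he0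
    rw [hif]
    have hval : (0 : ℕ) = 0 ∨ μ.rowLen 0 < μ.rowLen (0 - 1) := Or.inl rfl
    have hca : (addCell μ 0).card = μ.card + 1 := card_addCell hval
    have hne : addCell μ 0 ≠ μ := addCell_ne hval
    have hbox : theBox μ (addCell μ 0) = (0, μ.rowLen 0) :=
      theBox_insert (addCell_cells hval) (by simpa using corner_not_mem μ 0)
    refine ⟨by rw [h1]; exact ⟨le_addCell _ _, by omega⟩,
      by rw [h2]; exact ⟨le_addCell _ _, by omega⟩,
      by rw [h1, h2]; omega, ?_⟩
    rw [h1, h2, back_3a hne hne rfl (by rw [hbox])]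
lemma backward (ν lam ρ : YoungDiagram) (hlr : ABLE lam ρ) (hnr : ABLE ν ρ) :
    ABLE (backRule ν lam ρ).1 lam ∧ ABLE (backRule ν lam ρ).1 ν ∧
      ((backRule ν lam ρ).2 ≠ 0 → lam = (backRule ν lam ρ).1 ∧ ν = (backRule ν lam ρ).1) ∧
      rule (backRule ν lam ρ).1 lam ν (backRule ν lam ρ).2 = ρ ∧ (backRule ν lam ρ).2 ≤ 1 := by
  by_cases h1 : ρ = lam
  · rw [back_1 h1]
    subst h1
    refine ⟨⟨hnr.1, hnr.2⟩, able_refl ν, by simp, ?_, by omega⟩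
    by_cases hln : ρ = ν
    · rw [rule_1 hln, hln]
    · rw [rule_2 hln rfl]
  · by_cases h2 : ρ = ν
    · rw [back_2 h1 h2]
      subst h2
      refine ⟨able_refl lam, ⟨hlr.1, hlr.2⟩, by simp, ?_, by omega⟩
      rw [rule_1 rfl]
    · by_cases h3 : lam = ν
      · subst h3
        obtain ⟨hval, hadd, hbox, hcard⟩ := cover_spec hlr.1 h1 hlr.2
        set s := (theBox lam ρ).1 with hs
        by_cases h4 : s = 0
        · rw [back_3a h1 h2 rfl h4]
          refine ⟨able_refl lam, able_refl lam, fun _ => ⟨rfl, rfl⟩, ?_, by omega⟩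
          rw [rule_e (by omega : (1:ℕ) ≠ 0), hadd, h4]
        · rw [back_3b h1 h2 rfl h4]
          dsimp only
          have hval' : lam.rowLen s < lam.rowLen (s - 1) := hval.resolve_left h4
          have hvd : lam.rowLen (s - 1 + 1) < lam.rowLen (s - 1) := by
            have hss : s - 1 + 1 = s := by omega
            rw [hss]; exact hval'
          have hcd : lam.card = (delCell lam (s - 1)).card + 1 := card_delCell hvd
          set μ := delCell lam (s - 1) with hμ
          have hle : μ ≤ lam := delCell_le
          refine ⟨⟨hle, by omega⟩, ⟨hle, by omega⟩, by simp, ?_, by omega⟩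
          have hlm : lam ≠ μ := by
            intro hh
            rw [← hh] at hcd
            omega
          rw [rule_3 hlm hlm rfl]
          have hmem : (s - 1, lam.rowLen (s - 1) - 1) ∈ lam.cells := by
            simpa using endCell_mem (r := s - 1) (by omega)
          have hcells : lam.cells = insert (s - 1, lam.rowLen (s - 1) - 1) μ.cells := by
            rw [hμ, delCell_cells hvd, Finset.insert_erase hmem]
          have hboxμ : theBox μ lam = (s - 1, lam.rowLen (s - 1) - 1) :=
            theBox_insert hcells (by rw [hμ, delCell_cells hvd]; exact Finset.notMem_erase _ _)
          rw [hboxμ]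
          simp only
          have hss : s - 1 + 1 = s := by omega
          rw [hss, ← hadd]
      · rw [back_4 h1 h2 h3]
        dsimp only
        have hc1 : ρ.card = lam.card + 1 := by
          have := card_lt_of_le_ne hlr.1 h1
          have := hlr.2
          omega
        have hc2 : ρ.card = ν.card + 1 := by
          have := card_lt_of_le_ne hnr.1 h2
          have := hnr.2
          omega
        have hsup : lam ⊔ ν = ρ := by
          have hle : lam ⊔ ν ≤ ρ := sup_le hlr.1 hnr.1
          have hne : lam ≠ lam ⊔ ν := by
            intro hh
            have : ν ≤ lam := by rw [hh]; exact le_sup_right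
            exact h3 (eq_of_le_card this (by omega)).symm
          have := card_lt_of_le_ne (le_sup_left : lam ≤ lam ⊔ ν) (Ne.symm hne)
          have hcs : (lam ⊔ ν).card ≤ ρ.card := Finset.card_le_card (by exact_mod_cast hle)
          exact eq_of_le_card hle (by omega)
        have hsupinf := card_sup_inf lam ν
        have hcinf : lam.card = (lam ⊓ ν).card + 1 := by
          rw [hsup] at hsupinf
          omega
        refine ⟨⟨inf_le_left, by omega⟩, ⟨inf_le_right, by omega⟩, by simp, ?_, by omega⟩
        have hne1 : lam ≠ lam ⊓ ν := by
          intro hh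
          have : lam.card = (lam ⊓ ν).card := by rw [← hh]
          omega
        have hne2 : ν ≠ lam ⊓ ν := by
          intro hh
          have : ν.card = (lam ⊓ ν).card := by rw [← hh]
          omega
        rw [rule_4 hne1 hne2 h3, hsup]
noncomputable def grow (f : ℕ × ℕ → ℕ) : ℕ → ℕ → YoungDiagram
  | 0, _ => ⊥
  | _ + 1, 0 => ⊥
  | a + 1, b + 1 => rule (grow f a b) (grow f (a + 1) b) (grow f a (b + 1)) (f (b, a))
  termination_by a b => a + b

lemma grow_zl (f : ℕ × ℕ → ℕ) (b : ℕ) : grow f 0 b = ⊥ := by rw [grow]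

lemma grow_zr (f : ℕ × ℕ → ℕ) (a : ℕ) : grow f a 0 = ⊥ := by
  cases a
  · rw [grow]
  · rw [grow]

lemma grow_succ (f : ℕ × ℕ → ℕ) (a b : ℕ) :
    grow f (a + 1) (b + 1) =
      rule (grow f a b) (grow f (a + 1) b) (grow f a (b + 1)) (f (b, a)) := by
  rw [grow]

/-- indicator of a nonzero entry -/
def ind (f : ℕ × ℕ → ℕ) (c : ℕ × ℕ) : ℕ := if f c = 0 then 0 else 1

/-- number of nonzero entries in the rectangle of rows `< b`, columns `< a` -/
def ones (f : ℕ × ℕ → ℕ) (a b : ℕ) : ℕ :=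
  ∑ i ∈ Finset.range b, ∑ j ∈ Finset.range a, ind f (i, j)

lemma ones_zl (f : ℕ × ℕ → ℕ) (b : ℕ) : ones f 0 b = 0 := by simp [ones]

lemma ones_zr (f : ℕ × ℕ → ℕ) (a : ℕ) : ones f a 0 = 0 := by simp [ones]

lemma ones_succ_col (f : ℕ × ℕ → ℕ) (a b : ℕ) :
    ones f (a + 1) b = ones f a b + ∑ i ∈ Finset.range b, ind f (i, a) := by
  rw [ones, ones, ← Finset.sum_add_distrib]
  exact Finset.sum_congr rfl fun i _ => Finset.sum_range_succ _ _

lemma ones_succ_row (f : ℕ × ℕ → ℕ) (a b : ℕ) :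
    ones f a (b + 1) = ones f a b + ∑ j ∈ Finset.range a, ind f (b, j) := by
  rw [ones, ones]
  exact Finset.sum_range_succ _ _

lemma ones_rect (f : ℕ × ℕ → ℕ) (a b : ℕ) :
    ones f (a + 1) (b + 1) + ones f a b =
      ones f (a + 1) b + ones f a (b + 1) + ind f (b, a) := by
  rw [ones_succ_col f a (b + 1), ones_succ_col f a b, Finset.sum_range_succ]
  omega

/-- the key step lemma at one cell -/
lemma cellForward (f : ℕ × ℕ → ℕ) (hf : AtMostOnePerRowCol f) (a b : ℕ)
    (hP1 : (grow f a b).card = ones f a b)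
    (hP2 : (grow f (a + 1) b).card = ones f (a + 1) b)
    (hP3 : (grow f a (b + 1)).card = ones f a (b + 1))
    (hQh : ABLE (grow f a b) (grow f (a + 1) b))
    (hQv : ABLE (grow f a b) (grow f a (b + 1))) :
    ABLE (grow f (a + 1) b) (grow f (a + 1) (b + 1)) ∧
      ABLE (grow f a (b + 1)) (grow f (a + 1) (b + 1)) ∧
      (grow f (a + 1) (b + 1)).card = ones f (a + 1) (b + 1) ∧
      backRule (grow f a (b + 1)) (grow f (a + 1) b) (grow f (a + 1) (b + 1)) =
        (grow f a b, ind f (b, a)) := by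
  have he : f (b, a) ≠ 0 → grow f (a + 1) b = grow f a b ∧ grow f a (b + 1) = grow f a b := by
    intro hfba
    constructor
    · have hcol : ∑ i ∈ Finset.range b, ind f (i, a) = 0 := by
        apply Finset.sum_eq_zero
        intro i hi
        rw [Finset.mem_range] at hi
        by_contra hz
        have hfia : f (i, a) ≠ 0 := by
          intro h0; exact hz (by simp [ind, h0])
        have := hf (i, a) (b, a) hfia hfba (by simp; omega)
        simp at this
      have := ones_succ_col f a b
      exact (eq_of_le_card hQh.1 (by omega)).symm
    · have hrow : ∑ j ∈ Finset.range a, ind f (b, j) = 0 := by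
        apply Finset.sum_eq_zero
        intro j hj
        rw [Finset.mem_range] at hj
        by_contra hz
        have hfbj : f (b, j) ≠ 0 := by
          intro h0; exact hz (by simp [ind, h0])
        have := hf (b, j) (b, a) hfbj hfba (by simp; omega)
        simp at this
      have := ones_succ_row f a b
      exact (eq_of_le_card hQv.1 (by omega)).symm
  obtain ⟨c1, c2, c3, c4⟩ := forward (grow f a b) (grow f (a + 1) b) (grow f a (b + 1))
    (f (b, a)) hQh hQv he
  rw [← grow_succ] at c1 c2 c3 c4
  have hind : (if f (b, a) = 0 then 0 else 1) = ind f (b, a) := rfl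
  rw [hind] at c3 c4
  have hrect := ones_rect f a b
  exact ⟨c1, c2, by omega, c4⟩

lemma grow_PQ (f : ℕ × ℕ → ℕ) (hf : AtMostOnePerRowCol f) :
    ∀ n, (∀ a b, a + b ≤ n → (grow f a b).card = ones f a b) ∧
      (∀ a b, a + b ≤ n → ABLE (grow f a b) (grow f (a + 1) b) ∧
        ABLE (grow f a b) (grow f a (b + 1))) := by
  intro n
  induction n using Nat.strong_induction_on with
  | _ n ih =>
    have hP : ∀ a b, a + b ≤ n → (grow f a b).card = ones f a b := by
      intro a b hab
      match a, b with
      | 0, b => rw [grow_zl, ones_zl]; rfl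
      | a + 1, 0 => rw [grow_zr, ones_zr]; rfl
      | a + 1, b + 1 =>
        have hlt : a + b + 1 < n := by omega
        have hlt2 : a + b < n := by omega
        obtain ⟨ihP, ihQ⟩ := ih (a + b + 1) hlt
        have hQ := (ih (a + b) hlt2).2 a b le_rfl
        exact (cellForward f hf a b (ihP a b (by omega)) (ihP (a + 1) b (by omega))
          (ihP a (b + 1) (by omega)) hQ.1 hQ.2).2.2.1
    refine ⟨hP, ?_⟩
    intro a b hab
    constructor
    · match b with
      | 0 => rw [grow_zr, grow_zr]; exact able_refl ⊥
      | b + 1 =>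
        have hQ : ABLE (grow f a b) (grow f (a + 1) b) ∧
            ABLE (grow f a b) (grow f a (b + 1)) := by
          rcases Nat.lt_or_ge (a + b) n with h | h
          · exact (ih (a + b) (by omega)).2 a b le_rfl
          · omega
        exact (cellForward f hf a b (hP a b (by omega)) (hP (a + 1) b (by omega))
          (hP a (b + 1) (by omega)) hQ.1 hQ.2).2.1
    · match a with
      | 0 => rw [grow_zl, grow_zl]; exact able_refl ⊥
      | a + 1 =>
        have hQ : ABLE (grow f a b) (grow f (a + 1) b) ∧
            ABLE (grow f a b) (grow f a (b + 1)) := by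
          rcases Nat.lt_or_ge (a + b) n with h | h
          · exact (ih (a + b) (by omega)).2 a b le_rfl
          · omega
        exact (cellForward f hf a b (hP a b (by omega)) (hP (a + 1) b (by omega))
          (hP a (b + 1) (by omega)) hQ.1 hQ.2).1

lemma grow_card (f : ℕ × ℕ → ℕ) (hf : AtMostOnePerRowCol f) (a b : ℕ) :
    (grow f a b).card = ones f a b :=
  (grow_PQ f hf (a + b)).1 a b le_rfl

lemma grow_able_h (f : ℕ × ℕ → ℕ) (hf : AtMostOnePerRowCol f) (a b : ℕ) :
    ABLE (grow f a b) (grow f (a + 1) b) :=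
  ((grow_PQ f hf (a + b)).2 a b le_rfl).1

lemma grow_able_v (f : ℕ × ℕ → ℕ) (hf : AtMostOnePerRowCol f) (a b : ℕ) :
    ABLE (grow f a b) (grow f a (b + 1)) :=
  ((grow_PQ f hf (a + b)).2 a b le_rfl).2

lemma grow_back (f : ℕ × ℕ → ℕ) (hf : AtMostOnePerRowCol f) (a b : ℕ) :
    backRule (grow f a (b + 1)) (grow f (a + 1) b) (grow f (a + 1) (b + 1)) =
      (grow f a b, ind f (b, a)) :=
  (cellForward f hf a b (grow_card f hf a b) (grow_card f hf (a + 1) b)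
    (grow_card f hf a (b + 1)) (grow_able_h f hf a b) (grow_able_v f hf a b)).2.2.2
section Word

variable {k : ℕ} (w : Fin k → Bool)

/-- number of R's among the first `t` letters -/
noncomputable def Xc (t : ℕ) : ℕ :=
  (Finset.univ.filter fun j : Fin k => j.val < t ∧ w j = true).card

/-- number of D's among the first `t` letters -/
noncomputable def Yc (t : ℕ) : ℕ :=
  (Finset.univ.filter fun j : Fin k => j.val < t ∧ w j = false).card

lemma Xc_zero : Xc w 0 = 0 := by simp [Xc]

lemma Yc_zero : Yc w 0 = 0 := by simp [Yc]

lemma filter_succ_true (t : ℕ) (ht : t < k) :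
    (Finset.univ.filter fun j : Fin k => j.val < t + 1 ∧ w j = true) =
      if w ⟨t, ht⟩ = true then
        insert ⟨t, ht⟩ (Finset.univ.filter fun j : Fin k => j.val < t ∧ w j = true)
      else (Finset.univ.filter fun j : Fin k => j.val < t ∧ w j = true) := by
  by_cases hwt : w ⟨t, ht⟩ = true
  · rw [if_pos hwt]
    ext j
    simp only [Finset.mem_filter, Finset.mem_univ, true_and, Finset.mem_insert]
    constructor
    · rintro ⟨hj, hwj⟩
      rcases Nat.lt_or_ge j.val t with h | h
      · exact Or.inr ⟨h, hwj⟩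
      · left; exact Fin.ext (show j.val = t by omega)
    · rintro (rfl | ⟨hj, hwj⟩)
      · exact ⟨Nat.lt_succ_self t, hwt⟩
      · exact ⟨by omega, hwj⟩
  · rw [if_neg hwt]
    ext j
    simp only [Finset.mem_filter, Finset.mem_univ, true_and]
    constructor
    · rintro ⟨hj, hwj⟩
      refine ⟨?_, hwj⟩
      rcases Nat.lt_or_ge j.val t with h | h
      · exact h
      · exfalso
        have : j = ⟨t, ht⟩ := Fin.ext (show j.val = t by omega)
        rw [this] at hwj
        exact hwt hwj
    · rintro ⟨hj, hwj⟩
      exact ⟨by omega, hwj⟩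

lemma filter_succ_false (t : ℕ) (ht : t < k) :
    (Finset.univ.filter fun j : Fin k => j.val < t + 1 ∧ w j = false) =
      if w ⟨t, ht⟩ = false then
        insert ⟨t, ht⟩ (Finset.univ.filter fun j : Fin k => j.val < t ∧ w j = false)
      else (Finset.univ.filter fun j : Fin k => j.val < t ∧ w j = false) := by
  by_cases hwt : w ⟨t, ht⟩ = false
  · rw [if_pos hwt]
    ext j
    simp only [Finset.mem_filter, Finset.mem_univ, true_and, Finset.mem_insert]
    constructor
    · rintro ⟨hj, hwj⟩
      rcases Nat.lt_or_ge j.val t with h | h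
      · exact Or.inr ⟨h, hwj⟩
      · left; exact Fin.ext (show j.val = t by omega)
    · rintro (rfl | ⟨hj, hwj⟩)
      · exact ⟨Nat.lt_succ_self t, hwt⟩
      · exact ⟨by omega, hwj⟩
  · rw [if_neg hwt]
    ext j
    simp only [Finset.mem_filter, Finset.mem_univ, true_and]
    constructor
    · rintro ⟨hj, hwj⟩
      refine ⟨?_, hwj⟩
      rcases Nat.lt_or_ge j.val t with h | h
      · exact h
      · exfalso
        have : j = ⟨t, ht⟩ := Fin.ext (show j.val = t by omega)
        rw [this] at hwj
        exact hwt hwj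
    · rintro ⟨hj, hwj⟩
      exact ⟨by omega, hwj⟩

lemma Xc_succ (t : ℕ) (ht : t < k) :
    Xc w (t + 1) = Xc w t + (if w ⟨t, ht⟩ = true then 1 else 0) := by
  rw [Xc, Xc, filter_succ_true w t ht]
  by_cases hwt : w ⟨t, ht⟩ = true
  · rw [if_pos hwt, if_pos hwt, Finset.card_insert_of_notMem (by simp)]
  · rw [if_neg hwt, if_neg hwt]; omega

lemma Yc_succ (t : ℕ) (ht : t < k) :
    Yc w (t + 1) = Yc w t + (if w ⟨t, ht⟩ = false then 1 else 0) := by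
  rw [Yc, Yc, filter_succ_false w t ht]
  by_cases hwt : w ⟨t, ht⟩ = false
  · rw [if_pos hwt, if_pos hwt, Finset.card_insert_of_notMem (by simp)]
  · rw [if_neg hwt, if_neg hwt]; omega

lemma Xc_stab (t : ℕ) (ht : k ≤ t) : Xc w t = Xc w k := by
  unfold Xc
  congr 1
  ext j
  simp only [Finset.mem_filter, Finset.mem_univ, true_and]
  have := j.isLt
  constructor
  · rintro ⟨_, hwj⟩; exact ⟨by omega, hwj⟩
  · rintro ⟨_, hwj⟩; exact ⟨by omega, hwj⟩

lemma XY_sum (t : ℕ) (ht : t ≤ k) : Xc w t + Yc w t = t := by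
  induction t with
  | zero => simp [Xc_zero, Yc_zero]
  | succ t ih =>
    have ht' : t < k := by omega
    rw [Xc_succ w t ht', Yc_succ w t ht']
    have := ih (by omega)
    cases hwt : w ⟨t, ht'⟩ <;> simp [hwt] <;> omega

lemma Xc_mono {s t : ℕ} (h : s ≤ t) : Xc w s ≤ Xc w t := by
  apply Finset.card_le_card
  intro j hj
  simp only [Finset.mem_filter, Finset.mem_univ, true_and] at hj ⊢
  exact ⟨by omega, hj.2⟩

end Word

section Path

variable {k : ℕ} (F : YoungDiagram) (w : Fin k → Bool)

/-- the height of the boundary path just left of column line `a` -/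
noncomputable def Dfun (a : ℕ) : ℕ := if a = 0 then F.colLen 0 else F.colLen (a - 1)

lemma colLen_le_Dfun (a : ℕ) : F.colLen a ≤ Dfun F a := by
  rw [Dfun]
  split
  · next h => subst h; exact le_rfl
  · next h => exact F.colLen_anti _ _ (by omega)

lemma Dfun_le_H (a : ℕ) : Dfun F a ≤ F.colLen 0 := by
  rw [Dfun]
  split
  · exact le_rfl
  · exact F.colLen_anti _ _ (by omega)

lemma colLen_W : F.colLen (F.rowLen 0) = 0 := by
  by_contra h
  have h2 : ((0 : ℕ), F.rowLen 0) ∈ F := mem_iff_lt_colLen.2 (by omega)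
  rw [mem_iff_lt_rowLen] at h2
  omega

variable (hw : Encodes F w)
include hw

lemma Xc_k : Xc w k = F.rowLen 0 := by
  rw [Xc, ← hw.1]
  congr 1
  ext j
  simp [j.isLt]

lemma Yc_k : Yc w k = F.colLen 0 := by
  rw [Yc, ← hw.2.1]
  congr 1
  ext j
  simp [j.isLt]

/-- consequence of the third Encodes condition -/
lemma KE (t : ℕ) (ht : t < k) (hwt : w ⟨t, ht⟩ = true) :
    F.colLen (Xc w t) + Yc w (t + 1) = F.colLen 0 := by
  have h3 := hw.2.2 ⟨t, ht⟩ hwt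
  have h1 : (Finset.univ.filter fun j : Fin k => j ≤ ⟨t, ht⟩ ∧ w j = true).card = Xc w (t + 1) := by
    rw [Xc]
    congr 1
    ext j
    simp only [Finset.mem_filter, Finset.mem_univ, true_and, Fin.le_def]
    constructor
    · rintro ⟨hj, hwj⟩; exact ⟨by omega, hwj⟩
    · rintro ⟨hj, hwj⟩; exact ⟨by simpa using by omega, hwj⟩
  have hdisj : Disjoint (Finset.univ.filter fun j : Fin k => j.val < t + 1 ∧ w j = false)
      (Finset.univ.filter fun j : Fin k => (⟨t, ht⟩ : Fin k) < j ∧ w j = false) := by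
    rw [Finset.disjoint_left]
    intro j hj1 hj2
    simp only [Finset.mem_filter, Finset.mem_univ, true_and, Fin.lt_def] at hj1 hj2
    omega
  have h2 : Yc w k = Yc w (t + 1) +
      (Finset.univ.filter fun j : Fin k => (⟨t, ht⟩ : Fin k) < j ∧ w j = false).card := by
    rw [Yc, Yc, ← Finset.card_union_of_disjoint hdisj]
    congr 1
    ext j
    simp only [Finset.mem_filter, Finset.mem_univ, true_and, Finset.mem_union, Fin.lt_def]
    have := j.isLt
    constructor
    · rintro ⟨_, hwj⟩
      rcases Nat.lt_or_ge j.val (t + 1) with h | h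
      · exact Or.inl ⟨h, hwj⟩
      · exact Or.inr ⟨by omega, hwj⟩
    · rintro (⟨h, hwj⟩ | ⟨h, hwj⟩)
      · exact ⟨by omega, hwj⟩
      · exact ⟨by omega, hwj⟩
  have hXsucc : Xc w (t + 1) = Xc w t + 1 := by
    rw [Xc_succ w t ht, if_pos hwt]
  rw [h1, hXsucc] at h3
  simp only [Nat.add_sub_cancel] at h3
  rw [← h3] at h2
  rw [Yc_k F w hw] at h2
  omega

/-- the path point at time `t` lies weakly below the staircase: lower bound -/
lemma onpath_low : ∀ d t, t + d = k → F.colLen (Xc w t) + Yc w t ≤ F.colLen 0 := by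
  intro d
  induction d with
  | zero =>
    intro t htd
    have ht : t = k := by omega
    subst ht
    rw [Xc_k F w hw, colLen_W, Yc_k F w hw]
    omega
  | succ d ih =>
    intro t htd
    have ht : t < k := by omega
    cases hwt : w ⟨t, ht⟩ with
    | true =>
      have hke := KE F w hw t ht hwt
      have hY : Yc w (t + 1) = Yc w t := by
        rw [Yc_succ w t ht, if_neg (by simp [hwt])]; omega
      omega
    | false =>
      have hih := ih (t + 1) (by omega)
      have hX : Xc w (t + 1) = Xc w t := by
        rw [Xc_succ w t ht, if_neg (by simp [hwt])]; omega
      have hY : Yc w (t + 1) = Yc w t + 1 := by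
        rw [Yc_succ w t ht, if_pos hwt]
      rw [hX, hY] at hih
      omega

/-- upper bound -/
lemma onpath_high : ∀ t, t ≤ k → F.colLen 0 ≤ Dfun F (Xc w t) + Yc w t := by
  intro t
  induction t with
  | zero =>
    intro _
    rw [Xc_zero, Yc_zero, Dfun, if_pos rfl]; omega
  | succ t ih =>
    intro ht1
    have ht : t < k := by omega
    cases hwt : w ⟨t, ht⟩ with
    | true =>
      have hke := KE F w hw t ht hwt
      have hX : Xc w (t + 1) = Xc w t + 1 := by
        rw [Xc_succ w t ht, if_pos hwt]
      rw [hX, Dfun, if_neg (by omega)]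
      simp only [Nat.add_sub_cancel]
      omega
    | false =>
      have hih := ih (by omega)
      have hX : Xc w (t + 1) = Xc w t := by
        rw [Xc_succ w t ht, if_neg (by simp [hwt])]; omega
      have hY : Yc w (t + 1) = Yc w t + 1 := by
        rw [Yc_succ w t ht, if_pos hwt]
      rw [hX, hY]
      omega

end Path
section TimeAt

variable {k : ℕ} (F : YoungDiagram) (w : Fin k → Bool) (hw : Encodes F w)
include hw

lemma enter_time (a : ℕ) (ha : a ≤ F.rowLen 0) :
    ∃ t0, t0 ≤ k ∧ Xc w t0 = a ∧ Yc w t0 + Dfun F a = F.colLen 0 := by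
  have Pk : a ≤ Xc w k := by rw [Xc_k F w hw]; exact ha
  have hex : ∃ t, a ≤ Xc w t := ⟨k, Pk⟩
  set t0 := Nat.find hex with ht0
  have hspec : a ≤ Xc w t0 := Nat.find_spec hex
  have ht0k : t0 ≤ k := Nat.find_le Pk
  match hm : t0 with
  | 0 =>
    have hX0 : Xc w 0 = 0 := Xc_zero w
    rw [hX0] at hspec
    have haz : a = 0 := by omega
    subst haz
    refine ⟨0, by omega, hX0, ?_⟩
    rw [Yc_zero, Dfun, if_pos rfl]; omega
  | u + 1 =>
    have hu : ¬ a ≤ Xc w u := Nat.find_min hex (by omega)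
    have huk : u < k := by omega
    have hXsucc := Xc_succ w u huk
    have hwt : w ⟨u, huk⟩ = true := by
      by_contra hwf
      rw [if_neg hwf] at hXsucc
      omega
    rw [if_pos hwt] at hXsucc
    have hXu : Xc w u = a - 1 := by omega
    have hanz : a ≠ 0 := by omega
    have hke := KE F w hw u huk hwt
    rw [hXu] at hke
    refine ⟨u + 1, by omega, by omega, ?_⟩
    rw [Dfun, if_neg hanz]
    omega

lemma exit_time (a : ℕ) (ha : a ≤ F.rowLen 0) :
    ∃ t1, t1 ≤ k ∧ Xc w t1 = a ∧ Yc w t1 + F.colLen a = F.colLen 0 := by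
  rcases Nat.eq_or_lt_of_le ha with haw | haw
  · refine ⟨k, le_rfl, by rw [Xc_k F w hw]; omega, ?_⟩
    rw [Yc_k F w hw, haw, colLen_W]; omega
  · have Pk : a + 1 ≤ Xc w k := by rw [Xc_k F w hw]; omega
    have hex : ∃ t, a + 1 ≤ Xc w t := ⟨k, Pk⟩
    set t0 := Nat.find hex with ht0
    have hspec : a + 1 ≤ Xc w t0 := Nat.find_spec hex
    have ht0k : t0 ≤ k := Nat.find_le Pk
    match hm : t0 with
    | 0 =>
      rw [Xc_zero] at hspec
      omega
    | u + 1 =>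
      have hu : ¬ a + 1 ≤ Xc w u := Nat.find_min hex (by omega)
      have huk : u < k := by omega
      have hXsucc := Xc_succ w u huk
      have hwt : w ⟨u, huk⟩ = true := by
        by_contra hwf
        rw [if_neg hwf] at hXsucc
        omega
      rw [if_pos hwt] at hXsucc
      have hXu : Xc w u = a := by omega
      have hke := KE F w hw u huk hwt
      rw [hXu] at hke
      have hYsucc : Yc w (u + 1) = Yc w u := by
        rw [Yc_succ w u huk, if_neg (by simp [hwt])]; omega
      exact ⟨u, by omega, hXu, by omega⟩

lemma time_at (a b : ℕ) (ha : a ≤ F.rowLen 0) (h1 : F.colLen a ≤ b) (h2 : b ≤ Dfun F a) :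
    a + (F.colLen 0 - b) ≤ k ∧ Xc w (a + (F.colLen 0 - b)) = a ∧
      Yc w (a + (F.colLen 0 - b)) = F.colLen 0 - b := by
  have hDH : Dfun F a ≤ F.colLen 0 := Dfun_le_H F a
  have hbH : b ≤ F.colLen 0 := le_trans h2 hDH
  obtain ⟨t0, ht0k, hX0, hY0⟩ := enter_time F w hw a ha
  obtain ⟨t1, ht1k, hX1, hY1⟩ := exit_time F w hw a ha
  have hsum0 : Xc w t0 + Yc w t0 = t0 := XY_sum w t0 ht0k
  have hsum1 : Xc w t1 + Yc w t1 = t1 := XY_sum w t1 ht1k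
  set t := a + (F.colLen 0 - b) with htdef
  have ht0t : t0 ≤ t := by omega
  have htt1 : t ≤ t1 := by omega
  have htk : t ≤ k := by omega
  have hXle1 : Xc w t ≤ Xc w t1 := Xc_mono w htt1
  have hXge1 : Xc w t0 ≤ Xc w t := Xc_mono w ht0t
  have hXt : Xc w t = a := by omega
  have hsum : Xc w t + Yc w t = t := XY_sum w t htk
  exact ⟨htk, hXt, by omega⟩

end TimeAt
section Inverse

/-- the inverse growth labelling, defined from the boundary sequence `lam` -/
noncomputable def hgrow (F : YoungDiagram) {k : ℕ} (lam : Fin (k + 1) → YoungDiagram)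
    (a b : ℕ) : YoungDiagram :=
  if hb : b < F.colLen a then
    (backRule (hgrow F lam a (b + 1)) (hgrow F lam (a + 1) b)
      (hgrow F lam (a + 1) (b + 1))).1
  else if ht : a + (F.colLen 0 - b) ≤ k then lam ⟨a + (F.colLen 0 - b), by omega⟩
  else ⊥
  termination_by (F.rowLen 0 - a) + (F.colLen 0 - b)
  decreasing_by
  all_goals
    have h1 : F.colLen a ≤ F.colLen 0 := F.colLen_anti 0 a (Nat.zero_le a)
    have h2 : a < F.rowLen 0 := by
      have : (0, a) ∈ F := mem_iff_lt_colLen.2 (by omega)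
      rw [mem_iff_lt_rowLen] at this
      omega
    omega

/-- the filling extracted from the boundary sequence -/
noncomputable def hinv (F : YoungDiagram) {k : ℕ} (lam : Fin (k + 1) → YoungDiagram)
    (c : ℕ × ℕ) : ℕ :=
  if c.1 < F.colLen c.2 then
    (backRule (hgrow F lam c.2 (c.1 + 1)) (hgrow F lam (c.2 + 1) c.1)
      (hgrow F lam (c.2 + 1) (c.1 + 1))).2
  else 0

variable (F : YoungDiagram) {k : ℕ} (lam : Fin (k + 1) → YoungDiagram)

lemma hgrow_pos {a b : ℕ} (hb : b < F.colLen a) :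
    hgrow F lam a b = (backRule (hgrow F lam a (b + 1)) (hgrow F lam (a + 1) b)
      (hgrow F lam (a + 1) (b + 1))).1 := by
  rw [hgrow, dif_pos hb]

lemma hgrow_path {a b : ℕ} (hb : ¬ b < F.colLen a) (ht : a + (F.colLen 0 - b) ≤ k) :
    hgrow F lam a b = lam ⟨a + (F.colLen 0 - b), by omega⟩ := by
  rw [hgrow, dif_neg hb, dif_pos ht]

lemma hgrow_far {a b : ℕ} (hb : ¬ b < F.colLen a) (ht : ¬ a + (F.colLen 0 - b) ≤ k) :
    hgrow F lam a b = ⊥ := by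
  rw [hgrow, dif_neg hb, dif_neg ht]

/-- the oscillating-tableau condition on `lam` -/
def Osc {k : ℕ} (w : Fin k → Bool) (lam : Fin (k + 1) → YoungDiagram) : Prop :=
  lam 0 = ⊥ ∧ lam (Fin.last k) = ⊥ ∧
    ∀ i : Fin k, if w i then AddBoxLE (lam i.castSucc) (lam i.succ)
      else AddBoxLE (lam i.succ) (lam i.castSucc)

variable {w : Fin k → Bool}

lemma osc_R (ho : Osc w lam) {t : ℕ} (ht : t < k) (hwt : w ⟨t, ht⟩ = true) :
    ABLE (lam ⟨t, by omega⟩) (lam ⟨t + 1, by omega⟩) := by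
  have h := ho.2.2 ⟨t, ht⟩
  rw [hwt] at h
  simpa using h

lemma osc_D (ho : Osc w lam) {t : ℕ} (ht : t < k) (hwt : w ⟨t, ht⟩ = false) :
    ABLE (lam ⟨t + 1, by omega⟩) (lam ⟨t, by omega⟩) := by
  have h := ho.2.2 ⟨t, ht⟩
  rw [hwt] at h
  simpa using h

variable (hw : Encodes F w) (ho : Osc w lam)
include hw ho

/-- on-path horizontal edges (case `b = colLen a`, `a < W`) and vertical edges. -/
lemma hgrow_edges : ∀ n a b, (F.rowLen 0 - a) + (F.colLen 0 - b) ≤ n →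
    (b ≤ F.colLen a → ABLE (hgrow F lam a b) (hgrow F lam (a + 1) b)) ∧
      (b < Dfun F a → ABLE (hgrow F lam a b) (hgrow F lam a (b + 1))) := by
  intro n
  induction n using Nat.strong_induction_on with
  | _ n ih =>
    intro a b hn
    have hcol0 : F.colLen a ≤ F.colLen 0 := F.colLen_anti 0 a (Nat.zero_le a)
    have hcell : b < F.colLen a →
        ABLE (hgrow F lam a b) (hgrow F lam (a + 1) b) ∧
        ABLE (hgrow F lam a b) (hgrow F lam a (b + 1)) ∧
        ((backRule (hgrow F lam a (b + 1)) (hgrow F lam (a + 1) b)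
            (hgrow F lam (a + 1) (b + 1))).2 ≠ 0 →
          hgrow F lam (a + 1) b = hgrow F lam a b ∧
          hgrow F lam a (b + 1) = hgrow F lam a b) ∧
        rule (hgrow F lam a b) (hgrow F lam (a + 1) b) (hgrow F lam a (b + 1))
          (backRule (hgrow F lam a (b + 1)) (hgrow F lam (a + 1) b)
            (hgrow F lam (a + 1) (b + 1))).2 = hgrow F lam (a + 1) (b + 1) := by
      intro hb
      have haW : a < F.rowLen 0 := by
        have : (0, a) ∈ F := mem_iff_lt_colLen.2 (by omega)
        rw [mem_iff_lt_rowLen] at this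
        omega
      have hbH : b < F.colLen 0 := by omega
      -- vertical edge at (a+1, b)
      have hv : ABLE (hgrow F lam (a + 1) b) (hgrow F lam (a + 1) (b + 1)) := by
        have := (ih ((F.rowLen 0 - (a + 1)) + (F.colLen 0 - b)) (by omega) (a + 1) b le_rfl).2
        apply this
        rw [Dfun, if_neg (by omega)]
        simpa using hb
      -- horizontal edge at (a, b+1)
      have hh : ABLE (hgrow F lam a (b + 1)) (hgrow F lam (a + 1) (b + 1)) := by
        have := (ih ((F.rowLen 0 - a) + (F.colLen 0 - (b + 1))) (by omega) a (b + 1) le_rfl).1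
        exact this hb
      obtain ⟨c1, c2, c3, c4, c5⟩ :=
        backward (hgrow F lam a (b + 1)) (hgrow F lam (a + 1) b)
          (hgrow F lam (a + 1) (b + 1)) hv hh
      rw [← hgrow_pos F lam hb] at c1 c2 c3 c4
      exact ⟨c1, c2, fun hne => by
        obtain ⟨e1, e2⟩ := c3 hne
        exact ⟨e1, e2⟩, c4⟩
    constructor
    · -- horizontal edge
      intro hble
      rcases Nat.lt_or_ge b (F.colLen a) with hb | hb
      · exact (hcell hb).1
      · -- b = colLen a, on path
        have hbeq : b = F.colLen a := by omega
        have hb2 : ¬ b < F.colLen a := by omega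
        have hcol1 : F.colLen (a + 1) ≤ F.colLen a := F.colLen_anti a (a + 1) (by omega)
        have hb3 : ¬ b < F.colLen (a + 1) := by omega
        rcases Nat.lt_or_ge a (F.rowLen 0) with haW | haW
        · -- a < W : genuine on-path horizontal step
          obtain ⟨htk, hXt, hYt⟩ := time_at F w hw a b (by omega) (by omega)
            (by rw [hbeq]; exact colLen_le_Dfun F a)
          set t := a + (F.colLen 0 - b) with htdef
          have hbH : b ≤ F.colLen 0 := by omega
          have htk2 : t < k := by
            rcases Nat.eq_or_lt_of_le htk with h | h
            · exfalso
              have hXk := Xc_k F w hw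
              rw [h] at hXt
              omega
            · exact h
          have hwt : w ⟨t, htk2⟩ = true := by
            by_contra hwf
            have hwf' : w ⟨t, htk2⟩ = false := by
              cases hcase : w ⟨t, htk2⟩
              · rfl
              · exact absurd hcase hwf
            have hX1 : Xc w (t + 1) = Xc w t := by
              rw [Xc_succ w t htk2, if_neg (by simp [hwf'])]; omega
            have hY1 : Yc w (t + 1) = Yc w t + 1 := by
              rw [Yc_succ w t htk2, if_pos hwf']
            have hlow := onpath_low F w hw (k - (t + 1)) (t + 1) (by omega)
            rw [hX1, hY1, hXt, hYt, ← hbeq] at hlow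
            omega
          have hX1 : Xc w (t + 1) = Xc w t + 1 := by
            rw [Xc_succ w t htk2, if_pos hwt]
          have hY1 : Yc w (t + 1) = Yc w t := by
            rw [Yc_succ w t htk2, if_neg (by simp [hwt])]; omega
          have e1 : hgrow F lam a b = lam ⟨t, by omega⟩ := hgrow_path F lam hb2 htk
          have e2 : hgrow F lam (a + 1) b = lam ⟨t + 1, by omega⟩ := by
            have : (a + 1) + (F.colLen 0 - b) = t + 1 := by omega
            rw [hgrow_path F lam hb3 (by omega)]
            congr 1
            exact Fin.ext (by simp [this])
          rw [e1, e2]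
          exact osc_R lam ho htk2 hwt
        · -- a ≥ W : far region, both ⊥
          have hca : F.colLen a = 0 := by
            by_contra hca
            have : (0, a) ∈ F := mem_iff_lt_colLen.2 (by omega)
            rw [mem_iff_lt_rowLen] at this
            omega
          have hbz : b = 0 := by omega
          subst hbz
          rcases Nat.eq_or_lt_of_le haW with haW2 | haW2
          · -- a = W : endpoint
            have hYk := Yc_k F w hw
            have hXk := Xc_k F w hw
            have hkWH : F.rowLen 0 + F.colLen 0 = k := by
              have := XY_sum w k le_rfl
              omega
            have e1 : hgrow F lam a 0 = lam ⟨k, by omega⟩ := by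
              rw [hgrow_path F lam hb2 (by omega)]
              congr 1
              exact Fin.ext (by simp; omega)
            have e2 : hgrow F lam (a + 1) 0 = ⊥ := by
              apply hgrow_far F lam hb3
              omega
            rw [e1, e2]
            have : lam ⟨k, by omega⟩ = ⊥ := by
              have := ho.2.1
              rw [Fin.last] at this
              exact this
            rw [this]
            exact able_refl ⊥
          · -- a > W : both far
            have hkWH : F.rowLen 0 + F.colLen 0 = k := by
              have := XY_sum w k le_rfl
              have := Yc_k F w hw
              have := Xc_k F w hw
              omega
            have e1 : hgrow F lam a 0 = ⊥ := hgrow_far F lam hb2 (by omega)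
            have e2 : hgrow F lam (a + 1) 0 = ⊥ := hgrow_far F lam hb3 (by omega)
            rw [e1, e2]
            exact able_refl ⊥
    · -- vertical edge
      intro hbD
      rcases Nat.lt_or_ge b (F.colLen a) with hb | hb
      · exact (hcell hb).2.1
      · -- on-path vertical step
        have hb2 : ¬ b < F.colLen a := by omega
        have hb3 : ¬ b + 1 < F.colLen a := by omega
        have hDH : Dfun F a ≤ F.colLen 0 := Dfun_le_H F a
        have haW : a ≤ F.rowLen 0 := by
          by_contra haW
          have : F.colLen (a - 1) = 0 := by
            by_contra hca
            have : (0, a - 1) ∈ F := mem_iff_lt_colLen.2 (by omega)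
            rw [mem_iff_lt_rowLen] at this
            omega
          rw [Dfun, if_neg (by omega)] at hbD
          omega
        obtain ⟨htk', hXt', hYt'⟩ := time_at F w hw a (b + 1) haW (by omega) (by omega)
        set t' := a + (F.colLen 0 - (b + 1)) with ht'def
        have hbH : b + 1 ≤ F.colLen 0 := by omega
        have ht'k2 : t' < k := by
          rcases Nat.eq_or_lt_of_le htk' with h | h
          · exfalso
            have hYk := Yc_k F w hw
            rw [h] at hYt'
            omega
          · exact h
        have hwt : w ⟨t', ht'k2⟩ = false := by
          by_contra hwf
          have hwt' : w ⟨t', ht'k2⟩ = true := by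
            cases hcase : w ⟨t', ht'k2⟩
            · exact absurd hcase hwf
            · rfl
          have hke := KE F w hw t' ht'k2 hwt'
          have hY1 : Yc w (t' + 1) = Yc w t' := by
            rw [Yc_succ w t' ht'k2, if_neg (by simp [hwt'])]; omega
          rw [hY1, hXt', hYt'] at hke
          omega
        have e1 : hgrow F lam a b = lam ⟨t' + 1, by omega⟩ := by
          rw [hgrow_path F lam hb2 (by omega)]
          congr 1
          exact Fin.ext (by simp; omega)
        have e2 : hgrow F lam a (b + 1) = lam ⟨t', by omega⟩ := hgrow_path F lam hb3 htk'
        rw [e1, e2]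
        exact osc_D lam ho ht'k2 hwt

end Inverse
section InverseProps

variable (F : YoungDiagram) {k : ℕ} (lam : Fin (k + 1) → YoungDiagram) {w : Fin k → Bool}
variable (hw : Encodes F w) (ho : Osc w lam)
include hw ho

lemma hgrow_cell {a b : ℕ} (hb : b < F.colLen a) :
    ABLE (hgrow F lam a b) (hgrow F lam (a + 1) b) ∧
      ABLE (hgrow F lam a b) (hgrow F lam a (b + 1)) ∧
      ((backRule (hgrow F lam a (b + 1)) (hgrow F lam (a + 1) b)
          (hgrow F lam (a + 1) (b + 1))).2 ≠ 0 →
        hgrow F lam (a + 1) b = hgrow F lam a b ∧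
        hgrow F lam a (b + 1) = hgrow F lam a b) ∧
      rule (hgrow F lam a b) (hgrow F lam (a + 1) b) (hgrow F lam a (b + 1))
        (backRule (hgrow F lam a (b + 1)) (hgrow F lam (a + 1) b)
          (hgrow F lam (a + 1) (b + 1))).2 = hgrow F lam (a + 1) (b + 1) ∧
      (backRule (hgrow F lam a (b + 1)) (hgrow F lam (a + 1) b)
          (hgrow F lam (a + 1) (b + 1))).2 ≤ 1 := by
  have hv : ABLE (hgrow F lam (a + 1) b) (hgrow F lam (a + 1) (b + 1)) := by
    apply (hgrow_edges F lam hw ho ((F.rowLen 0 - (a + 1)) + (F.colLen 0 - b)) (a + 1) b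
      le_rfl).2
    rw [Dfun, if_neg (by omega)]
    simpa using hb
  have hh : ABLE (hgrow F lam a (b + 1)) (hgrow F lam (a + 1) (b + 1)) :=
    (hgrow_edges F lam hw ho ((F.rowLen 0 - a) + (F.colLen 0 - (b + 1))) a (b + 1) le_rfl).1 hb
  obtain ⟨c1, c2, c3, c4, c5⟩ :=
    backward (hgrow F lam a (b + 1)) (hgrow F lam (a + 1) b)
      (hgrow F lam (a + 1) (b + 1)) hv hh
  rw [← hgrow_pos F lam hb] at c1 c2 c3 c4
  exact ⟨c1, c2, fun h => (c3 h), c4, c5⟩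

omit ho in
lemma kWH : F.rowLen 0 + F.colLen 0 = k := by
  have h1 := XY_sum w k le_rfl
  have h2 := Yc_k F w hw
  have h3 := Xc_k F w hw
  omega

omit hw ho in
lemma colLen_zero_of_ge {a : ℕ} (ha : F.rowLen 0 ≤ a) : F.colLen a = 0 := by
  by_contra hca
  have : (0, a) ∈ F := mem_iff_lt_colLen.2 (by omega)
  rw [mem_iff_lt_rowLen] at this
  omega

lemma hgrow_bot (a : ℕ) : hgrow F lam a 0 = ⊥ := by
  have hk := kWH F hw
  have haux : ∀ d a, F.rowLen 0 + 1 = a + d → hgrow F lam a 0 = ⊥ := by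
    intro d
    induction d with
    | zero =>
      intro a ha
      have hca : F.colLen a = 0 := colLen_zero_of_ge F (by omega)
      apply hgrow_far F lam (by omega)
      omega
    | succ d ih =>
      intro a ha
      have hedge := (hgrow_edges F lam hw ho ((F.rowLen 0 - a) + F.colLen 0) a 0 le_rfl).1
        (Nat.zero_le _)
      rw [ih (a + 1) (by omega)] at hedge
      exact le_bot_iff.1 hedge.1
  rcases le_or_gt a (F.rowLen 0 + 1) with h | h
  · exact haux (F.rowLen 0 + 1 - a) a (by omega)
  · have hca : F.colLen a = 0 := colLen_zero_of_ge F (by omega)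
    apply hgrow_far F lam (by omega)
    omega

lemma hgrow_left (b : ℕ) : hgrow F lam 0 b = ⊥ := by
  have hk := kWH F hw
  have hlam0 : lam ⟨0, by omega⟩ = ⊥ := ho.1
  have haux : ∀ d b, F.colLen 0 = b + d → hgrow F lam 0 b = ⊥ := by
    intro d
    induction d with
    | zero =>
      intro b hb
      rw [hgrow_path F lam (by omega) (by omega)]
      have : 0 + (F.colLen 0 - b) = 0 := by omega
      rw [show (⟨0 + (F.colLen 0 - b), by omega⟩ : Fin (k + 1)) = ⟨0, by omega⟩ from
        Fin.ext (by simp [this])]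
      exact hlam0
    | succ d ih =>
      intro b hb
      have hedge := (hgrow_edges F lam hw ho ((F.rowLen 0) + (F.colLen 0 - b)) 0 b le_rfl).2
        (by rw [Dfun, if_pos rfl]; omega)
      rw [ih (b + 1) (by omega)] at hedge
      exact le_bot_iff.1 hedge.1
  rcases le_or_gt b (F.colLen 0) with h | h
  · exact haux (F.colLen 0 - b) b (by omega)
  · rw [hgrow_path F lam (by omega) (by omega)]
    have : 0 + (F.colLen 0 - b) = 0 := by omega
    rw [show (⟨0 + (F.colLen 0 - b), by omega⟩ : Fin (k + 1)) = ⟨0, by omega⟩ from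
      Fin.ext (by simp [this])]
    exact hlam0

omit hw ho in
lemma hinv_pos {a b : ℕ} (hb : b < F.colLen a) :
    hinv F lam (b, a) = (backRule (hgrow F lam a (b + 1)) (hgrow F lam (a + 1) b)
      (hgrow F lam (a + 1) (b + 1))).2 := by
  rw [hinv, if_pos hb]

omit hw ho in
lemma hinv_zero {a b : ℕ} (hb : ¬ b < F.colLen a) : hinv F lam (b, a) = 0 := by
  rw [hinv, if_neg hb]

omit hw ho in
lemma card_bot : (⊥ : YoungDiagram).card = 0 := by
  show (⊥ : YoungDiagram).cells.card = 0
  simp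

lemma hgrow_card_ones : ∀ n a b, a + b ≤ n → b ≤ Dfun F a →
    (hgrow F lam a b).card = ones (hinv F lam) a b := by
  intro n
  induction n using Nat.strong_induction_on with
  | _ n ih =>
    intro a b hn hbD
    match a, b with
    | 0, b => rw [hgrow_left F lam hw ho, ones_zl, card_bot]
    | a + 1, 0 => rw [hgrow_bot F lam hw ho, ones_zr, card_bot]
    | a + 1, b + 1 =>
      have hDa : Dfun F (a + 1) = F.colLen a := by
        rw [Dfun, if_neg (by omega)]
        norm_num
      have hb : b < F.colLen a := by omega
      have hbDa : b ≤ Dfun F a := le_trans (le_of_lt hb) (colLen_le_Dfun F a)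
      obtain ⟨c1, c2, c3, c4, c5⟩ := hgrow_cell F lam hw ho hb
      set e := (backRule (hgrow F lam a (b + 1)) (hgrow F lam (a + 1) b)
        (hgrow F lam (a + 1) (b + 1))).2 with hedef
      obtain ⟨f1, f2, f3, f4⟩ := forward (hgrow F lam a b) (hgrow F lam (a + 1) b)
        (hgrow F lam a (b + 1)) e c1 c2 c3
      rw [c4] at f3
      have hP1 := ih (a + b) (by omega) a b le_rfl hbDa
      have hP2 := ih (a + 1 + b) (by omega) (a + 1) b le_rfl (by omega)
      have hP3 := ih (a + b + 1) (by omega) a (b + 1) le_rfl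
        (le_trans hb (colLen_le_Dfun F a))
      have hrect := ones_rect (hinv F lam) a b
      have hind : ind (hinv F lam) (b, a) = (if e = 0 then 0 else 1) := by
        rw [ind, hinv_pos F lam hb, ← hedef]
      omega

lemma hinv_filling : Filling01 F (hinv F lam) := by
  intro c hc
  obtain ⟨i, j⟩ := c
  by_cases hb : i < F.colLen j
  · constructor
    · exact mem_iff_lt_colLen.2 hb
    · have := (hgrow_cell F lam hw ho hb).2.2.2.2
      rw [hinv_pos F lam hb] at hc ⊢
      omega
  · rw [hinv_zero F lam hb] at hc
    omega

lemma hinv_col_zero {a i i' : ℕ} (hne : hinv F lam (i', a) ≠ 0) (hii : i < i') :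
    hinv F lam (i, a) = 0 := by
  have hb' : i' < F.colLen a := by
    by_contra hb
    exact hne (hinv_zero F lam hb)
  obtain ⟨c1, c2, c3, c4, c5⟩ := hgrow_cell F lam hw ho hb'
  rw [hinv_pos F lam hb'] at hne
  obtain ⟨e1, _⟩ := c3 hne
  have hcards : (hgrow F lam (a + 1) i').card = (hgrow F lam a i').card := by rw [e1]
  have hP1 := hgrow_card_ones F lam hw ho (a + i') a i' le_rfl
    (le_trans (le_of_lt hb') (colLen_le_Dfun F a))
  have hP2 := hgrow_card_ones F lam hw ho (a + 1 + i') (a + 1) i' le_rfl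
    (by rw [Dfun, if_neg (by omega)]; norm_num; omega)
  rw [hP1, hP2] at hcards
  have hsum := ones_succ_col (hinv F lam) a i'
  have hzero : ∑ r ∈ Finset.range i', ind (hinv F lam) (r, a) = 0 := by omega
  have := (Finset.sum_eq_zero_iff.1 hzero) i (Finset.mem_range.2 hii)
  rw [ind] at this
  by_contra hcon
  rw [if_neg hcon] at this
  omega

lemma hinv_row_zero {b j j' : ℕ} (hne : hinv F lam (b, j') ≠ 0) (hjj : j < j') :
    hinv F lam (b, j) = 0 := by
  have hb' : b < F.colLen j' := by
    by_contra hb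
    exact hne (hinv_zero F lam hb)
  obtain ⟨c1, c2, c3, c4, c5⟩ := hgrow_cell F lam hw ho hb'
  rw [hinv_pos F lam hb'] at hne
  obtain ⟨_, e2⟩ := c3 hne
  have hcards : (hgrow F lam j' (b + 1)).card = (hgrow F lam j' b).card := by rw [e2]
  have hP1 := hgrow_card_ones F lam hw ho (j' + b) j' b le_rfl
    (le_trans (le_of_lt hb') (colLen_le_Dfun F j'))
  have hP2 := hgrow_card_ones F lam hw ho (j' + b + 1) j' (b + 1) le_rfl
    (le_trans hb' (colLen_le_Dfun F j'))
  rw [hP1, hP2] at hcards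
  have hsum := ones_succ_row (hinv F lam) j' b
  have hzero : ∑ r ∈ Finset.range j', ind (hinv F lam) (b, r) = 0 := by omega
  have := (Finset.sum_eq_zero_iff.1 hzero) j (Finset.mem_range.2 hjj)
  rw [ind] at this
  by_contra hcon
  rw [if_neg hcon] at this
  omega

lemma hinv_amopc : AtMostOnePerRowCol (hinv F lam) := by
  intro c d hc hd hcd
  obtain ⟨i, j⟩ := c
  obtain ⟨i', j'⟩ := d
  constructor
  · intro h
    simp only at h
    subst h
    have hjj : j ≠ j' := by
      intro h
      exact hcd (by rw [h])
    rcases Nat.lt_or_ge j j' with h | h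
    · exact hc (hinv_row_zero F lam hw ho hd h)
    · exact hd (hinv_row_zero F lam hw ho hc (by omega))
  · intro h
    simp only at h
    subst h
    have hii : i ≠ i' := by
      intro h
      exact hcd (by rw [h])
    rcases Nat.lt_or_ge i i' with h | h
    · exact hc (hinv_col_zero F lam hw ho hd h)
    · exact hd (hinv_col_zero F lam hw ho hc (by omega))

end InverseProps
section RoundTrip

variable (F : YoungDiagram) {k : ℕ} {w : Fin k → Bool}

lemma Yc_mono (s t : ℕ) (h : s ≤ t) : Yc w s ≤ Yc w t := by
  apply Finset.card_le_card
  intro j hj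
  simp only [Finset.mem_filter, Finset.mem_univ, true_and] at hj ⊢
  exact ⟨by omega, hj.2⟩

/-- the forward map on fillings -/
noncomputable def Phi (w : Fin k → Bool) (f : ℕ × ℕ → ℕ) : Fin (k + 1) → YoungDiagram :=
  fun t => grow f (Xc w t.val) (F.colLen 0 - Yc w t.val)

variable (hw : Encodes F w)
include hw

lemma Phi_osc (f : ℕ × ℕ → ℕ) (hf : AtMostOnePerRowCol f) : Osc w (Phi F w f) := by
  have hYk := Yc_k F w hw
  have hXk := Xc_k F w hw
  refine ⟨?_, ?_, ?_⟩
  · show grow f (Xc w (0 : Fin (k + 1)).val) _ = ⊥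
    have h0 : ((0 : Fin (k + 1)) : ℕ) = 0 := rfl
    rw [h0, Xc_zero, grow_zl]
  · show grow f (Xc w (Fin.last k).val) (F.colLen 0 - Yc w (Fin.last k).val) = ⊥
    have hk : (Fin.last k).val = k := rfl
    rw [hk, hYk, Nat.sub_self, grow_zr]
  · intro i
    set t := i.val with htdef
    have ht : t < k := i.isLt
    have hcast : (i.castSucc).val = t := rfl
    have hsucc : (i.succ).val = t + 1 := rfl
    have hYle : Yc w (t + 1) ≤ F.colLen 0 := by
      have := Yc_mono (w := w) (t + 1) k (by omega)
      omega
    have hiw : w i = w ⟨t, ht⟩ := by congr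
    cases hwt : w ⟨t, ht⟩ with
    | true =>
      rw [if_pos rfl]
      show ABLE (grow f (Xc w (i.castSucc).val) (F.colLen 0 - Yc w (i.castSucc).val))
        (grow f (Xc w (i.succ).val) (F.colLen 0 - Yc w (i.succ).val))
      rw [hcast, hsucc]
      have hX : Xc w (t + 1) = Xc w t + 1 := by rw [Xc_succ w t ht, if_pos hwt]
      have hY : Yc w (t + 1) = Yc w t := by
        rw [Yc_succ w t ht, if_neg (by simp [hwt])]; omega
      rw [hX, hY]
      exact grow_able_h f hf _ _
    | false =>
      rw [if_neg (by simp)]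
      show ABLE (grow f (Xc w (i.succ).val) (F.colLen 0 - Yc w (i.succ).val))
        (grow f (Xc w (i.castSucc).val) (F.colLen 0 - Yc w (i.castSucc).val))
      rw [hcast, hsucc]
      have hX : Xc w (t + 1) = Xc w t := by
        rw [Xc_succ w t ht, if_neg (by simp [hwt])]; omega
      have hY : Yc w (t + 1) = Yc w t + 1 := by rw [Yc_succ w t ht, if_pos hwt]
      have hsub : F.colLen 0 - Yc w t = (F.colLen 0 - Yc w (t + 1)) + 1 := by omega
      rw [hX, hsub]
      exact grow_able_v f hf _ _

/-- downward equality: the inverse growth of the boundary of `grow f` is `grow f` -/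
lemma hgrow_eq_grow (f : ℕ × ℕ → ℕ) (hfill : Filling01 F f) (hf : AtMostOnePerRowCol f) :
    ∀ n a b, (F.rowLen 0 - a) + (F.colLen 0 - b) ≤ n → b ≤ Dfun F a →
      hgrow F (Phi F w f) a b = grow f a b := by
  have ho : Osc w (Phi F w f) := Phi_osc F hw f hf
  have hk := kWH F hw
  intro n
  induction n using Nat.strong_induction_on with
  | _ n ih =>
    intro a b hn hbD
    have hDH : Dfun F a ≤ F.colLen 0 := Dfun_le_H F a
    rcases Nat.lt_or_ge b (F.colLen a) with hb | hb
    · -- interior cell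
      have haW : a < F.rowLen 0 := by
        have : (0, a) ∈ F := mem_iff_lt_colLen.2 (by omega)
        rw [mem_iff_lt_rowLen] at this
        omega
      have hbH : b < F.colLen 0 := by
        have := F.colLen_anti 0 a (Nat.zero_le a)
        omega
      have hDa1 : Dfun F (a + 1) = F.colLen a := by
        rw [Dfun, if_neg (by omega)]; norm_num
      have e1 := ih ((F.rowLen 0 - a) + (F.colLen 0 - (b + 1))) (by omega) a (b + 1) le_rfl
        (le_trans hb (colLen_le_Dfun F a))
      have e2 := ih ((F.rowLen 0 - (a + 1)) + (F.colLen 0 - b)) (by omega) (a + 1) b le_rfl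
        (by omega)
      have e3 := ih ((F.rowLen 0 - (a + 1)) + (F.colLen 0 - (b + 1))) (by omega)
        (a + 1) (b + 1) le_rfl (by omega)
      rw [hgrow_pos F (Phi F w f) hb, e1, e2, e3, grow_back f hf a b]
    · -- on path or far
      rcases le_or_gt (a + (F.colLen 0 - b)) k with ht | ht
      · -- on path
        have haW : a ≤ F.rowLen 0 := by
          by_contra haW
          have hca : F.colLen (a - 1) = 0 := colLen_zero_of_ge F (by omega)
          have hDa : Dfun F a = 0 := by rw [Dfun, if_neg (by omega)]; exact hca
          have hbz : b = 0 := by omega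
          omega
        obtain ⟨htk, hXt, hYt⟩ := time_at F w hw a b haW (by omega) hbD
        rw [hgrow_path F (Phi F w f) (by omega) ht]
        show grow f (Xc w (a + (F.colLen 0 - b))) _ = grow f a b
        rw [hXt, hYt]
        have hbH : b ≤ F.colLen 0 := by omega
        have : F.colLen 0 - (F.colLen 0 - b) = b := by omega
        rw [this]
      · -- far region
        have haW : F.rowLen 0 < a := by
          by_contra haW
          omega
        have hca : F.colLen (a - 1) = 0 := colLen_zero_of_ge F (by omega)
        have hDa : Dfun F a = 0 := by rw [Dfun, if_neg (by omega)]; exact hca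
        have hbz : b = 0 := by omega
        subst hbz
        rw [hgrow_far F (Phi F w f) (by omega) (by omega), grow_zr]

lemma hinv_Phi_eq (f : ℕ × ℕ → ℕ) (hfill : Filling01 F f) (hf : AtMostOnePerRowCol f) :
    hinv F (Phi F w f) = f := by
  funext c
  obtain ⟨i, j⟩ := c
  rcases Nat.lt_or_ge i (F.colLen j) with hb | hb
  · rw [hinv_pos F (Phi F w f) hb]
    have hjW : j < F.rowLen 0 := by
      have : (0, j) ∈ F := mem_iff_lt_colLen.2 (by omega)
      rw [mem_iff_lt_rowLen] at this
      omega
    have hiH : i < F.colLen 0 := by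
      have := F.colLen_anti 0 j (Nat.zero_le j)
      omega
    have hDj1 : Dfun F (j + 1) = F.colLen j := by
      rw [Dfun, if_neg (by omega)]; norm_num
    have e1 := hgrow_eq_grow F hw f hfill hf ((F.rowLen 0 - j) + (F.colLen 0 - (i + 1)))
      j (i + 1) le_rfl (le_trans hb (colLen_le_Dfun F j))
    have e2 := hgrow_eq_grow F hw f hfill hf ((F.rowLen 0 - (j + 1)) + (F.colLen 0 - i))
      (j + 1) i le_rfl (by omega)
    have e3 := hgrow_eq_grow F hw f hfill hf ((F.rowLen 0 - (j + 1)) + (F.colLen 0 - (i + 1)))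
      (j + 1) (i + 1) le_rfl (by omega)
    rw [e1, e2, e3, grow_back f hf j i]
    show ind f (i, j) = f (i, j)
    rw [ind]
    by_cases hz : f (i, j) = 0
    · rw [if_pos hz, hz]
    · rw [if_neg hz, (hfill (i, j) hz).2]
  · rw [hinv_zero F (Phi F w f) (by omega)]
    by_contra hz
    have h2 := hfill (i, j) (fun h => hz h.symm)
    rw [mem_iff_lt_colLen] at h2
    omega

/-- upward equality -/
lemma grow_eq_hgrow (lam : Fin (k + 1) → YoungDiagram) (ho : Osc w lam) :
    ∀ n a b, a + b ≤ n → b ≤ Dfun F a →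
      grow (hinv F lam) a b = hgrow F lam a b := by
  intro n
  induction n using Nat.strong_induction_on with
  | _ n ih =>
    intro a b hn hbD
    match a, b with
    | 0, b => rw [grow_zl, hgrow_left F lam hw ho]
    | a + 1, 0 => rw [grow_zr, hgrow_bot F lam hw ho]
    | a + 1, b + 1 =>
      have hDa1 : Dfun F (a + 1) = F.colLen a := by
        rw [Dfun, if_neg (by omega)]; norm_num
      have hb : b < F.colLen a := by omega
      have e1 := ih (a + b) (by omega) a b le_rfl
        (le_trans (le_of_lt hb) (colLen_le_Dfun F a))
      have e2 := ih (a + 1 + b) (by omega) (a + 1) b le_rfl (by omega)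
      have e3 := ih (a + b + 1) (by omega) a (b + 1) le_rfl
        (le_trans hb (colLen_le_Dfun F a))
      obtain ⟨c1, c2, c3, c4, c5⟩ := hgrow_cell F lam hw ho hb
      rw [grow_succ, e1, e2, e3, hinv_pos F lam hb, c4]

lemma Phi_hinv_eq (lam : Fin (k + 1) → YoungDiagram) (ho : Osc w lam) :
    Phi F w (hinv F lam) = lam := by
  funext t
  have htk : t.val ≤ k := by omega
  have hYle : Yc w t.val ≤ F.colLen 0 := by
    have h1 := Yc_mono (w := w) t.val k htk
    have h2 := Yc_k F w hw
    omega
  have hlow := onpath_low F w hw (k - t.val) t.val (by omega)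
  have hhigh := onpath_high F w hw t.val htk
  have hsum := XY_sum w t.val htk
  show grow (hinv F lam) (Xc w t.val) (F.colLen 0 - Yc w t.val) = lam t
  rw [grow_eq_hgrow F hw lam ho ((Xc w t.val) + (F.colLen 0 - Yc w t.val))
    (Xc w t.val) (F.colLen 0 - Yc w t.val) le_rfl (by omega)]
  rw [hgrow_path F lam (by omega) (by omega)]
  have hidx : Xc w t.val + (F.colLen 0 - (F.colLen 0 - Yc w t.val)) = t.val := by omega
  have : (⟨Xc w t.val + (F.colLen 0 - (F.colLen 0 - Yc w t.val)), by omega⟩ : Fin (k + 1)) = t :=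
    Fin.ext (by simp [hidx])
  rw [this]

end RoundTrip
end GrowthAux

/-- Growth diagram bijection: the 0-1-fillings of a Ferrers shape `F` with
boundary word `w` having at most one `1` in each row and each column are in
bijection with the oscillating tableaux of type `w`, i.e. sequences
`(∅ = λ⁰, λ¹, …, λᵏ = ∅)` of partitions in which consecutive partitions differ by
at most one square, with `λ^{i-1} ⊆ λ^i` if `w_i = R` and `λ^{i-1} ⊇ λ^i` if
`w_i = D`. -/
theorem fillings_equiv_oscillating_tableaux (F : YoungDiagram) (k : ℕ)
    (w : Fin k → Bool) (hw : Encodes F w) :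
    Nonempty (
      {f : ℕ × ℕ → ℕ // Filling01 F f ∧ AtMostOnePerRowCol f} ≃
      {lam : Fin (k + 1) → YoungDiagram //
        lam 0 = ⊥ ∧ lam (Fin.last k) = ⊥ ∧
        ∀ i : Fin k,
          if w i then AddBoxLE (lam i.castSucc) (lam i.succ)
          else AddBoxLE (lam i.succ) (lam i.castSucc)}) := by
  refine ⟨{
    toFun := fun fp => ⟨GrowthAux.Phi F w fp.1, GrowthAux.Phi_osc F hw fp.1 fp.2.2⟩
    invFun := fun lp => ⟨GrowthAux.hinv F lp.1,
      GrowthAux.hinv_filling F lp.1 hw ⟨lp.2.1, lp.2.2.1, lp.2.2.2⟩,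
      GrowthAux.hinv_amopc F lp.1 hw ⟨lp.2.1, lp.2.2.1, lp.2.2.2⟩⟩
    left_inv := fun fp => Subtype.ext (GrowthAux.hinv_Phi_eq F hw fp.1 fp.2.1 fp.2.2)
    right_inv := fun lp => Subtype.ext
      (GrowthAux.Phi_hinv_eq F hw lp.1 ⟨lp.2.1, lp.2.2.1, lp.2.2.2⟩) }⟩
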